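/- For all positive integers n and k, there exists an unweighted digraph G with exactly 3kn + 1 vertices such that G admits a (k+1)-realization and every (k+1)-realization of G has length at least 2k·n^k. -/

import Mathlib

/-- The sequence digraph of `x` with window size `w` has an arc `(u,v)` exactly when
there are positions `k < k' < k + w` with `x_k = u` and `x_{k'} = v`. -/
def seqArc {V : Type*} (w : ℕ) (x : List V) (u v : V) : Prop :=
  ∃ k k' : ℕ, k < k' ∧ k' < k + w ∧ x[k]? = some u ∧ x[k']? = some v

/-- `x` is a `w`-realization of the digraph on vertex set `V` (self-loops allowed)
with adjacency relation `Adj`. -/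
def IsRealizationD {V : Type*} (w : ℕ) (Adj : V → V → Prop) (x : List V) : Prop :=
  x ≠ [] ∧ (∀ v : V, v ∈ x) ∧ ∀ u v : V, Adj u v ↔ seqArc w x u v

namespace S16

/-! ### Basic definitions -/

def enc (n j v a : ℕ) : ℕ := 3*n*j + 3*v + a
def dg (n j t : ℕ) : ℕ := t / n^j % n
def cy (n j t : ℕ) : Prop := t % n^j = n^j - 1
instance (n j t : ℕ) : Decidable (cy n j t) := by unfold cy; infer_instance
def bc (n j t : ℕ) : ℕ := if cy n j t then 2 else 1
def TT (n k : ℕ) : ℕ := n^k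
def LL (n k : ℕ) : ℕ := 2*k*(TT n k) + n + 1

def wcode (n k : ℕ) (p : ℕ) : ℕ :=
  if p = 0 then 3*k*n
  else if p ≤ 2*k*(TT n k) then
    (if (p-1) % (2*k) < k then
        enc n ((p-1) % (2*k)) (dg n ((p-1) % (2*k)) ((p-1)/(2*k))) 0
     else
        enc n ((p-1) % (2*k) - k) (dg n ((p-1) % (2*k) - k) ((p-1)/(2*k)))
          (bc n ((p-1) % (2*k) - k) ((p-1)/(2*k))))
  else enc n 0 (min (p - 2*k*(TT n k) - 1) (n-1)) 1

def posA (k t j : ℕ) : ℕ := 2*k*t + j + 1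
def posB (k t j : ℕ) : ℕ := 2*k*t + k + j + 1

variable {n k : ℕ}

/-! ### Digit arithmetic -/

lemma sub_one_mod {a b : ℕ} (ha : 0 < a) (hb : 0 < b) : (a*b - 1) % a = a - 1 := by
  have h2 : a*(b-1) = a*b - a := by rw [Nat.mul_sub_one]
  have h3 : a ≤ a*b := Nat.le_mul_of_pos_right a hb
  have h : a*b - 1 = (a - 1) + a*(b-1) := by omega
  rw [h, Nat.add_mul_mod_self_left]
  exact Nat.mod_eq_of_lt (by omega)

lemma sub_one_div {a b : ℕ} (ha : 0 < a) (hb : 0 < b) : (a*b - 1) / a = b - 1 := by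
  have h2 : a*(b-1) = a*b - a := by rw [Nat.mul_sub_one]
  have h3 : a ≤ a*b := Nat.le_mul_of_pos_right a hb
  have h : a*b - 1 = (a - 1) + a*(b-1) := by omega
  rw [h, Nat.add_mul_div_left _ _ ha, Nat.div_eq_of_lt (by omega)]
  omega

lemma dg_lt (hn : 2 ≤ n) (j t : ℕ) : dg n j t < n := Nat.mod_lt _ (by omega)

lemma dg_zero (j : ℕ) : dg n j 0 = 0 := by unfold dg; simp

lemma cy_zero (t : ℕ) : cy n 0 t := by unfold cy; simp [Nat.mod_one]

lemma bc_zero (t : ℕ) : bc n 0 t = 2 := by unfold bc; rw [if_pos (cy_zero t)]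

lemma bc_cases (j t : ℕ) : bc n j t = 1 ∨ bc n j t = 2 := by
  unfold bc; by_cases h : cy n j t <;> simp [h]

lemma cy_mono (hn : 2 ≤ n) {i j t : ℕ} (hij : i ≤ j) (h : cy n j t) : cy n i t := by
  unfold cy at *
  have hd : n^i ∣ n^j := pow_dvd_pow n hij
  have h1 : t % n^i = (t % n^j) % n^i := (Nat.mod_mod_of_dvd t hd).symm
  rw [h1, h]
  obtain ⟨c, hc⟩ := hd
  have hip : 0 < n^i := pow_pos (by omega) i
  have hjp : 0 < n^j := pow_pos (by omega) j
  have hcp : 0 < c := by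
    rcases Nat.eq_zero_or_pos c with h0 | hpos
    · exfalso; rw [h0, Nat.mul_zero] at hc; omega
    · exact hpos
  rw [hc]; exact sub_one_mod hip hcp

lemma cy_succ_iff (hn : 2 ≤ n) (j t : ℕ) :
    cy n (j+1) t ↔ (cy n j t ∧ dg n j t = n - 1) := by
  unfold cy dg
  have hjp : 0 < n^j := pow_pos (by omega) j
  have hs : n^(j+1) = n^j * n := pow_succ n j
  rw [hs, Nat.mod_mul]
  have h1 : t % n^j < n^j := Nat.mod_lt _ hjp
  have h2 : t / n^j % n < n := Nat.mod_lt _ (by omega)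
  have hx : n^j * (n-1) = n^j*n - n^j := by rw [Nat.mul_sub_one]
  have hnn : n^j ≤ n^j * n := Nat.le_mul_of_pos_right _ (by omega)
  constructor
  · intro h
    constructor
    · by_contra hne
      have : n^j * (t / n^j % n) ≤ n^j * (n-1) := Nat.mul_le_mul_left _ (by omega)
      omega
    · by_contra hne
      have h3 : n^j * (t / n^j % n) ≤ n^j * (n-2) := Nat.mul_le_mul_left _ (by omega)
      have h4 : n^j * (n-2) + n^j * 2 = n^j * n := by rw [← Nat.mul_add]; congr 1; omega
      omega
  · rintro ⟨h1', h2'⟩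
    rw [h1', h2']
    omega

lemma dg_step_not (hn : 2 ≤ n) {j t : ℕ} (h : ¬ cy n j t) : dg n j (t+1) = dg n j t := by
  unfold cy at h; unfold dg
  have hjp : 0 < n^j := pow_pos (by omega) j
  have hmod := Nat.div_add_mod t (n^j)
  have h1 : t % n^j < n^j := Nat.mod_lt _ hjp
  have ht1 : t + 1 = (t % n^j + 1) + n^j * (t / n^j) := by omega
  have hdiv : (t+1) / n^j = t / n^j := by
    rw [ht1, Nat.add_mul_div_left _ _ hjp, Nat.div_eq_of_lt (by omega)]; omega
  rw [hdiv]

lemma dg_step_cy (hn : 2 ≤ n) {j t : ℕ} (h : cy n j t) :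
    dg n j (t+1) = (dg n j t + 1) % n := by
  unfold cy at h; unfold dg
  have hjp : 0 < n^j := pow_pos (by omega) j
  have hmod := Nat.div_add_mod t (n^j)
  have ht1 : t + 1 = n^j * (t / n^j + 1) := by rw [Nat.mul_add, Nat.mul_one]; omega
  have hdiv : (t+1) / n^j = t / n^j + 1 := by rw [ht1, Nat.mul_div_cancel_left _ hjp]
  rw [hdiv, Nat.add_mod (t / n^j) 1 n, Nat.mod_eq_of_lt (show 1 < n by omega)]

lemma cy_last (hn : 2 ≤ n) {j : ℕ} (hj : j ≤ k) : cy n j (TT n k - 1) := by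
  unfold cy TT
  have hsp : n^k = n^j * n^(k-j) := by rw [← pow_add]; congr 1; omega
  have hip : 0 < n^j := pow_pos (by omega) j
  have hcp : 0 < n^(k-j) := pow_pos (by omega) _
  rw [hsp]; exact sub_one_mod hip hcp

lemma dg_last (hn : 2 ≤ n) {j : ℕ} (hj : j < k) : dg n j (TT n k - 1) = n - 1 := by
  unfold dg TT
  have hsp : n^k = n^j * n^(k-j) := by rw [← pow_add]; congr 1; omega
  have hip : 0 < n^j := pow_pos (by omega) j
  have hcp : 0 < n^(k-j) := pow_pos (by omega) _
  rw [hsp, sub_one_div hip hcp]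
  have hs2 : n^(k-j) = n * n^(k-j-1) := by rw [← pow_succ']; congr 1; omega
  have hc2 : 0 < n^(k-j-1) := pow_pos (by omega) _
  rw [hs2, sub_one_mod (by omega) hc2]

lemma top_unique (hn : 2 ≤ n) (hk : 1 ≤ k) {t : ℕ} (ht : t < TT n k)
    (h1 : cy n (k-1) t) (h2 : dg n (k-1) t = n - 1) : t = TT n k - 1 := by
  have hcy : cy n ((k-1)+1) t := (cy_succ_iff hn (k-1) t).mpr ⟨h1, h2⟩
  have hke : (k-1)+1 = k := by omega
  rw [hke] at hcy
  unfold cy TT at *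
  have := Nat.mod_eq_of_lt ht
  omega

lemma TT_pos (hn : 2 ≤ n) : 0 < TT n k := pow_pos (by omega) _

/-! ### `enc` facts -/

lemma enc_lt (hn : 2 ≤ n) {j v a : ℕ} (hj : j < k) (hv : v < n) (ha : a < 3) :
    enc n j v a < 3*k*n := by
  unfold enc
  have h1 : 3*n*j + 3*n ≤ 3*n*k := by
    have := Nat.mul_le_mul_left (3*n) (show j+1 ≤ k by omega)
    calc 3*n*j + 3*n = 3*n*(j+1) := by ring
    _ ≤ 3*n*k := this
  have : 3*n*k = 3*k*n := by ring
  omega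

lemma enc_inj (hn : 2 ≤ n) {j v a j' v' a' : ℕ} (hv : v < n) (hv' : v' < n)
    (ha : a < 3) (ha' : a' < 3) (h : enc n j v a = enc n j' v' a') :
    j = j' ∧ v = v' ∧ a = a' := by
  unfold enc at h
  have h3 : 3*v + a < 3*n := by omega
  have h3' : 3*v' + a' < 3*n := by omega
  rcases Nat.lt_trichotomy j j' with hlt | heq | hgt
  · exfalso
    have : 3*n*j + 3*n ≤ 3*n*j' := by
      calc 3*n*j + 3*n = 3*n*(j+1) := by ring
      _ ≤ 3*n*j' := Nat.mul_le_mul_left _ (by omega)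
    omega
  · refine ⟨heq, ?_, ?_⟩ <;> (subst heq; omega)
  · exfalso
    have : 3*n*j' + 3*n ≤ 3*n*j := by
      calc 3*n*j' + 3*n = 3*n*(j'+1) := by ring
      _ ≤ 3*n*j := Nat.mul_le_mul_left _ (by omega)
    omega

lemma enc_ne_z (hn : 2 ≤ n) {j v a : ℕ} (hj : j < k) (hv : v < n) (ha : a < 3) :
    enc n j v a ≠ 3*k*n :=
  Nat.ne_of_lt (enc_lt hn hj hv ha)

lemma code_cases (hn : 2 ≤ n) {c : ℕ} (hc : c < 3*k*n + 1) :
    c = 3*k*n ∨ ∃ j, j < k ∧ ∃ v, v < n ∧ ∃ a, a < 3 ∧ c = enc n j v a := by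
  rcases Nat.lt_or_ge c (3*k*n) with h | h
  · right
    refine ⟨c / (3*n), ?_, (c % (3*n)) / 3, ?_, c % 3, ?_, ?_⟩
    · by_contra hge
      have : 3*n*k ≤ 3*n*(c/(3*n)) := Nat.mul_le_mul_left _ (by omega)
      have h2 := Nat.div_add_mod c (3*n)
      have : 3*n*k = 3*k*n := by ring
      omega
    · have := Nat.mod_lt c (show 0 < 3*n by omega)
      omega
    · omega
    · unfold enc
      have h2 := Nat.div_add_mod c (3*n)
      have h3 := Nat.div_add_mod (c % (3*n)) 3
      have h4 : c % (3*n) % 3 = c % 3 := Nat.mod_mod_of_dvd c ⟨n, by ring⟩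
      omega
  · left; omega

/-! ### position computation -/

lemma wcode_posA (hn : 2 ≤ n) (hk : 2 ≤ k) {t j : ℕ} (ht : t < TT n k) (hj : j < k) :
    wcode n k (posA k t j) = enc n j (dg n j t) 0 := by
  have h2k : 0 < 2*k := by omega
  have hp0 : posA k t j ≠ 0 := by unfold posA; omega
  have hple : posA k t j ≤ 2*k*(TT n k) := by
    unfold posA
    have : 2*k*t + 2*k ≤ 2*k*(TT n k) := by
      calc 2*k*t + 2*k = 2*k*(t+1) := by ring
      _ ≤ 2*k*(TT n k) := Nat.mul_le_mul_left _ (by omega)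
    omega
  have hsub : posA k t j - 1 = j + 2*k*t := by unfold posA; omega
  unfold wcode
  rw [if_neg hp0, if_pos hple, hsub]
  have hmod : (j + 2*k*t) % (2*k) = j := by
    rw [Nat.add_mul_mod_self_left]; exact Nat.mod_eq_of_lt (by omega)
  have hdiv : (j + 2*k*t) / (2*k) = t := by
    rw [Nat.add_mul_div_left _ _ h2k, Nat.div_eq_of_lt (by omega)]; omega
  rw [hmod, hdiv, if_pos hj]

lemma wcode_posB (hn : 2 ≤ n) (hk : 2 ≤ k) {t j : ℕ} (ht : t < TT n k) (hj : j < k) :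
    wcode n k (posB k t j) = enc n j (dg n j t) (bc n j t) := by
  have h2k : 0 < 2*k := by omega
  have hp0 : posB k t j ≠ 0 := by unfold posB; omega
  have hple : posB k t j ≤ 2*k*(TT n k) := by
    unfold posB
    have : 2*k*t + 2*k ≤ 2*k*(TT n k) := by
      calc 2*k*t + 2*k = 2*k*(t+1) := by ring
      _ ≤ 2*k*(TT n k) := Nat.mul_le_mul_left _ (by omega)
    omega
  have hsub : posB k t j - 1 = (k + j) + 2*k*t := by unfold posB; omega
  unfold wcode
  rw [if_neg hp0, if_pos hple, hsub]
  have hmod : ((k+j) + 2*k*t) % (2*k) = k + j := by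
    rw [Nat.add_mul_mod_self_left]; exact Nat.mod_eq_of_lt (by omega)
  have hdiv : ((k+j) + 2*k*t) / (2*k) = t := by
    rw [Nat.add_mul_div_left _ _ h2k, Nat.div_eq_of_lt (by omega)]; omega
  rw [hmod, hdiv, if_neg (by omega)]
  have hkj : k + j - k = j := by omega
  rw [hkj]

lemma wcode_zero : wcode n k 0 = 3*k*n := by unfold wcode; simp

lemma wcode_end (hn : 2 ≤ n) {m : ℕ} (hm1 : 1 ≤ m) (hmn : m ≤ n) :
    wcode n k (2*k*(TT n k) + m) = enc n 0 (m-1) 1 := by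
  unfold wcode
  rw [if_neg (by omega), if_neg (by omega)]
  congr 1
  omega

lemma wcode_lt (hn : 2 ≤ n) (hk : 2 ≤ k) (p : ℕ) : wcode n k p < 3*k*n + 1 := by
  unfold wcode
  split
  · omega
  split
  · split
    · exact Nat.lt_succ_of_lt (enc_lt hn (by omega) (dg_lt hn _ _) (by omega))
    · have h2k : 0 < 2*k := by omega
      have := Nat.mod_lt (p-1) h2k
      have hb := bc_cases (n := n) ((p-1) % (2*k) - k) ((p-1)/(2*k))
      refine Nat.lt_succ_of_lt (enc_lt hn (by omega) (dg_lt hn _ _) (by omega))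
  · exact Nat.lt_succ_of_lt (enc_lt hn (by omega) (by omega) (by omega))

/-! ### occurrence decomposition -/

lemma occ (hk : 2 ≤ k) {p : ℕ} (hp : p < LL n k) :
    p = 0 ∨
    (∃ t, t < TT n k ∧ ∃ j, j < k ∧ p = posA k t j) ∨
    (∃ t, t < TT n k ∧ ∃ j, j < k ∧ p = posB k t j) ∨
    (∃ m, 1 ≤ m ∧ m ≤ n ∧ p = 2*k*(TT n k) + m) := by
  rcases Nat.eq_zero_or_pos p with h0 | hpos
  · left; exact h0
  right
  by_cases hmid : p ≤ 2*k*(TT n k)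
  · have h2k : 0 < 2*k := by omega
    set t := (p-1)/(2*k) with htdef
    set r := (p-1) % (2*k) with hrdef
    have hr2k : r < 2*k := Nat.mod_lt _ h2k
    have hpt : p - 1 = 2*k*t + r := by
      rw [htdef, hrdef]; exact (Nat.div_add_mod (p-1) (2*k)).symm
    have htT : t < TT n k := by
      have h1 : 2*k*t ≤ p - 1 := by omega
      by_contra hge
      have : 2*k*(TT n k) ≤ 2*k*t := Nat.mul_le_mul_left _ (by omega)
      omega
    rcases Nat.lt_or_ge r k with hrk | hrk
    · left; exact ⟨t, htT, r, hrk, by unfold posA; omega⟩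
    · right; left; exact ⟨t, htT, r - k, by omega, by unfold posB; omega⟩
  · right; right
    refine ⟨p - 2*k*(TT n k), by omega, ?_, by omega⟩
    unfold LL at hp; omega

/-! ### the word -/

def W (n k p : ℕ) : Fin (3*k*n+1) := ⟨wcode n k p % (3*k*n+1), Nat.mod_lt _ (by omega)⟩

lemma W_val (hn : 2 ≤ n) (hk : 2 ≤ k) (p : ℕ) : (W n k p).val = wcode n k p := by
  unfold W
  exact Nat.mod_eq_of_lt (wcode_lt hn hk p)

def xw (n k : ℕ) : List (Fin (3*k*n+1)) := (List.range (LL n k)).map (W n k)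

lemma xw_get {p : ℕ} (hp : p < LL n k) : (xw n k)[p]? = some (W n k p) := by
  unfold xw
  rw [List.getElem?_map, List.getElem?_range hp]
  rfl

lemma xw_get' {p : ℕ} {σ : Fin (3*k*n+1)} (h : (xw n k)[p]? = some σ) :
    p < LL n k ∧ W n k p = σ := by
  have hlen : (xw n k).length = LL n k := by unfold xw; simp
  have hp : p < LL n k := by
    by_contra hge
    rw [List.getElem?_eq_none (by omega)] at h
    cases h
  rw [xw_get hp] at h
  exact ⟨hp, Option.some.inj h⟩

def Dd (n k : ℕ) (σ τ : Fin (3*k*n+1)) : Prop := seqArc (k+1) (xw n k) σ τ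

lemma Dd_elim {σ τ : Fin (3*k*n+1)} (h : Dd n k σ τ) :
    ∃ p q, p < q ∧ q ≤ p + k ∧ q < LL n k ∧ W n k p = σ ∧ W n k q = τ := by
  obtain ⟨a, b, hab, hbk, ha, hb⟩ := h
  obtain ⟨hpa, hwa⟩ := xw_get' ha
  obtain ⟨hpb, hwb⟩ := xw_get' hb
  exact ⟨a, b, hab, by omega, hpb, hwa, hwb⟩

/-! ### gap lemmas -/

lemma blk {t t' : ℕ} (h : t < t') : 2*k*t + 2*k ≤ 2*k*t' := by
  calc 2*k*t + 2*k = 2*k*(t+1) := by ring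
  _ ≤ 2*k*t' := Nat.mul_le_mul_left _ h

lemma gapAA (hk : 2 ≤ k) {t j t' j' : ℕ} (hj : j < k) (hj' : j' < k)
    (h1 : posA k t j < posA k t' j') (h2 : posA k t' j' ≤ posA k t j + k) :
    t' = t ∧ j < j' := by
  unfold posA at h1 h2
  rcases Nat.lt_trichotomy t t' with h | h | h
  · exfalso; have := blk (k := k) h; omega
  · subst h; omega
  · exfalso; have := blk (k := k) h; omega

lemma gapAB (hk : 2 ≤ k) {t j t' j' : ℕ} (hj : j < k) (hj' : j' < k)
    (h1 : posA k t j < posB k t' j') (h2 : posB k t' j' ≤ posA k t j + k) :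
    t' = t ∧ j' ≤ j := by
  unfold posA posB at h1 h2
  rcases Nat.lt_trichotomy t t' with h | h | h
  · exfalso; have := blk (k := k) h; omega
  · subst h; omega
  · exfalso; have := blk (k := k) h; omega

lemma gapBA (hk : 2 ≤ k) {t j t' j' : ℕ} (hj : j < k) (hj' : j' < k)
    (h1 : posB k t j < posA k t' j') (h2 : posA k t' j' ≤ posB k t j + k) :
    t' = t + 1 ∧ j' ≤ j := by
  unfold posA posB at h1 h2
  rcases Nat.lt_trichotomy t t' with h | h | h
  · rcases Nat.lt_or_ge (t+1) t' with h3 | h3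
    · exfalso
      have hb1 := blk (k := k) h3
      have hb2 : 2*k*(t+1) = 2*k*t + 2*k := by ring
      omega
    · have ht' : t' = t + 1 := by omega
      subst ht'
      have hb2 : 2*k*(t+1) = 2*k*t + 2*k := by ring
      omega
  · exfalso; subst h; omega
  · exfalso; have := blk (k := k) h; omega

lemma gapBB (hk : 2 ≤ k) {t j t' j' : ℕ} (hj : j < k) (hj' : j' < k)
    (h1 : posB k t j < posB k t' j') (h2 : posB k t' j' ≤ posB k t j + k) :
    t' = t ∧ j < j' := by
  unfold posB at h1 h2
  rcases Nat.lt_trichotomy t t' with h | h | h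
  · exfalso; have := blk (k := k) h; omega
  · subst h; omega
  · exfalso; have := blk (k := k) h; omega

lemma gapAE (hn : 2 ≤ n) (hk : 2 ≤ k) {t j m : ℕ} (hj : j < k) (ht : t < TT n k)
    (hm : 1 ≤ m)
    (h1 : posA k t j < 2*k*(TT n k) + m) (h2 : 2*k*(TT n k) + m ≤ posA k t j + k) :
    False := by
  unfold posA at h1 h2
  have hb : 2*k*t + 2*k ≤ 2*k*(TT n k) := by
    calc 2*k*t + 2*k = 2*k*(t+1) := by ring
    _ ≤ 2*k*(TT n k) := Nat.mul_le_mul_left _ (by omega)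
  omega

lemma gapBE (hn : 2 ≤ n) (hk : 2 ≤ k) {t j m : ℕ} (hj : j < k) (ht : t < TT n k)
    (hm : 1 ≤ m)
    (h1 : posB k t j < 2*k*(TT n k) + m) (h2 : 2*k*(TT n k) + m ≤ posB k t j + k) :
    t = TT n k - 1 ∧ m ≤ j + 1 := by
  unfold posB at h1 h2
  have hT : 0 < TT n k := TT_pos hn
  rcases Nat.lt_or_ge t (TT n k - 1) with h | h
  · exfalso
    have hb : 2*k*t + 2*k ≤ 2*k*(TT n k - 1) := by
      calc 2*k*t + 2*k = 2*k*(t+1) := by ring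
      _ ≤ 2*k*(TT n k - 1) := Nat.mul_le_mul_left _ (by omega)
    have hb2 : 2*k*(TT n k - 1) + 2*k = 2*k*(TT n k) := by
      calc 2*k*(TT n k - 1) + 2*k = 2*k*((TT n k - 1)+1) := by ring
      _ = 2*k*(TT n k) := by congr 1; omega
    omega
  · have ht' : t = TT n k - 1 := by omega
    subst ht'
    have hb2 : 2*k*(TT n k - 1) + 2*k = 2*k*(TT n k) := by
      calc 2*k*(TT n k - 1) + 2*k = 2*k*((TT n k - 1)+1) := by ring
      _ = 2*k*(TT n k) := by congr 1; omega
    omega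

/-! ### decoders: which positions carry which symbol -/

lemma formZ (hn : 2 ≤ n) (hk : 2 ≤ k) {p : ℕ} (hp : p < LL n k)
    (hw : wcode n k p = 3*k*n) : p = 0 := by
  rcases occ hk hp with h0 | ⟨t, ht, j, hj, rfl⟩ | ⟨t, ht, j, hj, rfl⟩ | ⟨m, hm1, hmn, rfl⟩
  · exact h0
  · rw [wcode_posA hn hk ht hj] at hw
    exact absurd hw (enc_ne_z hn hj (dg_lt hn _ _) (by omega))
  · rw [wcode_posB hn hk ht hj] at hw
    have hb := bc_cases (n := n) j t
    exact absurd hw (enc_ne_z hn hj (dg_lt hn _ _) (by omega))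
  · rw [wcode_end hn hm1 hmn] at hw
    exact absurd hw (enc_ne_z hn (by omega) (by omega) (by omega))

lemma formA (hn : 2 ≤ n) (hk : 2 ≤ k) {p j v : ℕ} (hp : p < LL n k)
    (hj : j < k) (hv : v < n) (hw : wcode n k p = enc n j v 0) :
    ∃ t, t < TT n k ∧ p = posA k t j ∧ v = dg n j t := by
  rcases occ hk hp with h0 | ⟨t, ht, j', hj', rfl⟩ | ⟨t, ht, j', hj', rfl⟩ | ⟨m, hm1, hmn, rfl⟩
  · exfalso; rw [h0, wcode_zero] at hw
    exact absurd hw.symm (enc_ne_z hn hj hv (by omega))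
  · rw [wcode_posA hn hk ht hj'] at hw
    obtain ⟨hj1, hv1, _⟩ := enc_inj hn (dg_lt hn _ _) hv (by omega) (by omega) hw
    cases hj1
    exact ⟨t, ht, rfl, hv1.symm⟩
  · exfalso; rw [wcode_posB hn hk ht hj'] at hw
    have hb := bc_cases (n := n) j' t
    obtain ⟨_, _, ha⟩ := enc_inj hn (dg_lt hn _ _) hv (by omega) (by omega) hw
    omega
  · exfalso; rw [wcode_end hn hm1 hmn] at hw
    obtain ⟨_, _, ha⟩ := enc_inj hn (by omega) hv (by omega) (by omega) hw
    omega

lemma formB (hn : 2 ≤ n) (hk : 2 ≤ k) {p j v b : ℕ} (hp : p < LL n k)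
    (hj : j < k) (hv : v < n) (hb : b = 1 ∨ b = 2) (hsp : ¬(j = 0 ∧ b = 1))
    (hw : wcode n k p = enc n j v b) :
    ∃ t, t < TT n k ∧ p = posB k t j ∧ v = dg n j t ∧ bc n j t = b := by
  rcases occ hk hp with h0 | ⟨t, ht, j', hj', rfl⟩ | ⟨t, ht, j', hj', rfl⟩ | ⟨m, hm1, hmn, rfl⟩
  · exfalso; rw [h0, wcode_zero] at hw
    exact absurd hw.symm (enc_ne_z hn hj hv (by omega))
  · exfalso; rw [wcode_posA hn hk ht hj'] at hw
    obtain ⟨_, _, ha⟩ := enc_inj hn (dg_lt hn _ _) hv (by omega) (by omega) hw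
    omega
  · rw [wcode_posB hn hk ht hj'] at hw
    have hbc := bc_cases (n := n) j' t
    obtain ⟨hj1, hv1, ha⟩ := enc_inj hn (dg_lt hn _ _) hv (by omega) (by omega) hw
    cases hj1
    exact ⟨t, ht, rfl, hv1.symm, ha⟩
  · exfalso; rw [wcode_end hn hm1 hmn] at hw
    obtain ⟨hj1, hv1, ha⟩ := enc_inj hn (by omega) hv (by omega) (by omega) hw
    exact hsp ⟨hj1.symm, by omega⟩

lemma formSpec (hn : 2 ≤ n) (hk : 2 ≤ k) {p v : ℕ} (hp : p < LL n k)
    (hv : v < n) (hw : wcode n k p = enc n 0 v 1) :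
    p = 2*k*(TT n k) + v + 1 := by
  rcases occ hk hp with h0 | ⟨t, ht, j', hj', rfl⟩ | ⟨t, ht, j', hj', rfl⟩ | ⟨m, hm1, hmn, rfl⟩
  · exfalso; rw [h0, wcode_zero] at hw
    exact absurd hw.symm (enc_ne_z hn (by omega) hv (by omega))
  · exfalso; rw [wcode_posA hn hk ht hj'] at hw
    obtain ⟨_, _, ha⟩ := enc_inj hn (dg_lt hn _ _) hv (by omega) (by omega) hw
    omega
  · exfalso; rw [wcode_posB hn hk ht hj'] at hw
    have hbc := bc_cases (n := n) j' t
    obtain ⟨hj1, _, ha⟩ := enc_inj hn (dg_lt hn _ _) hv (by omega) (by omega) hw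
    subst hj1
    rw [← ha] at hbc
    rcases hbc with h1 | h1
    · have := bc_zero (n := n) t; omega
    · omega
  · rw [wcode_end hn hm1 hmn] at hw
    obtain ⟨_, hv1, _⟩ := enc_inj hn (by omega) hv (by omega) (by omega) hw
    omega

/-! ### arc lemmas -/

lemma Dd_elim' (hn : 2 ≤ n) (hk : 2 ≤ k) {σ τ : Fin (3*k*n+1)} (h : Dd n k σ τ) :
    ∃ p q, p < q ∧ q ≤ p + k ∧ q < LL n k ∧
      wcode n k p = σ.val ∧ wcode n k q = τ.val := by
  obtain ⟨p, q, h1, h2, h3, h4, h5⟩ := Dd_elim h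
  refine ⟨p, q, h1, h2, h3, ?_, ?_⟩
  · rw [← h4]; exact (W_val hn hk p).symm
  · rw [← h5]; exact (W_val hn hk q).symm

lemma posA_le (hk : 2 ≤ k) {t j : ℕ} (ht : t < TT n k) (hj : j < k) :
    posA k t j ≤ 2*k*(TT n k) := by
  unfold posA
  have : 2*k*t + 2*k ≤ 2*k*(TT n k) := by
    calc 2*k*t + 2*k = 2*k*(t+1) := by ring
    _ ≤ 2*k*(TT n k) := Nat.mul_le_mul_left _ (by omega)
  omega

lemma posB_le (hk : 2 ≤ k) {t j : ℕ} (ht : t < TT n k) (hj : j < k) :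
    posB k t j ≤ 2*k*(TT n k) := by
  unfold posB
  have : 2*k*t + 2*k ≤ 2*k*(TT n k) := by
    calc 2*k*t + 2*k = 2*k*(t+1) := by ring
    _ ≤ 2*k*(TT n k) := Nat.mul_le_mul_left _ (by omega)
  omega

/-- nothing points to `z`. -/
lemma L1 (hn : 2 ≤ n) (hk : 2 ≤ k) {σ τ : Fin (3*k*n+1)} (hτ : τ.val = 3*k*n) :
    ¬ Dd n k σ τ := by
  intro h
  obtain ⟨p, q, h1, h2, h3, h4, h5⟩ := Dd_elim' hn hk h
  rw [hτ] at h5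
  have := formZ hn hk h3 h5
  omega

/-- `z` points only to the `A`-symbols of block 0. -/
lemma L2 (hn : 2 ≤ n) (hk : 2 ≤ k) {σ τ : Fin (3*k*n+1)} (hσ : σ.val = 3*k*n)
    (h : Dd n k σ τ) : ∃ j, j < k ∧ τ.val = enc n j 0 0 := by
  obtain ⟨p, q, h1, h2, h3, h4, h5⟩ := Dd_elim' hn hk h
  rw [hσ] at h4
  have hp0 : p = 0 := formZ hn hk (by omega) h4
  subst hp0
  have hT : 0 < TT n k := TT_pos hn
  rcases occ hk h3 with h0 | ⟨t, ht, j, hj, rfl⟩ | ⟨t, ht, j, hj, rfl⟩ | ⟨m, hm1, hmn, rfl⟩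
  · omega
  · have ht0 : t = 0 := by
      unfold posA at h1 h2
      rcases Nat.eq_zero_or_pos t with h | h
      · exact h
      · exfalso; have := blk (k := k) (show 0 < t from h); omega
    subst ht0
    refine ⟨j, hj, ?_⟩
    rw [← h5, wcode_posA hn hk ht hj, dg_zero]
  · exfalso; unfold posB at h2
    rcases Nat.eq_zero_or_pos t with h | h
    · subst h; omega
    · have := blk (k := k) (show 0 < t from h); omega
  · exfalso
    have : 2*k*1 ≤ 2*k*(TT n k) := Nat.mul_le_mul_left _ (by omega)
    omega

/-- no `A → A` arc with target track not above the source track. -/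
lemma LA (hn : 2 ≤ n) (hk : 2 ≤ k) {σ τ : Fin (3*k*n+1)} {i u l v : ℕ}
    (hi : i < k) (hu : u < n) (hl : l < k) (hv : v < n) (hli : l ≤ i)
    (hσ : σ.val = enc n i u 0) (hτ : τ.val = enc n l v 0) : ¬ Dd n k σ τ := by
  intro h
  obtain ⟨p, q, h1, h2, h3, h4, h5⟩ := Dd_elim' hn hk h
  obtain ⟨t, ht, rfl, _⟩ := formA hn hk (by omega) hi hu (h4.trans hσ)
  obtain ⟨t', ht', rfl, _⟩ := formA hn hk h3 hl hv (h5.trans hτ)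
  obtain ⟨_, hlt⟩ := gapAA hk hi hl h1 (by omega)
  omega

/-- no `A → B` arc going up. -/
lemma L10 (hn : 2 ≤ n) (hk : 2 ≤ k) {σ τ : Fin (3*k*n+1)} {i u l v b : ℕ}
    (hi : i < k) (hu : u < n) (hl : l < k) (hv : v < n) (hil : i < l)
    (hb : b = 1 ∨ b = 2)
    (hσ : σ.val = enc n i u 0) (hτ : τ.val = enc n l v b) : ¬ Dd n k σ τ := by
  intro h
  obtain ⟨p, q, h1, h2, h3, h4, h5⟩ := Dd_elim' hn hk h
  obtain ⟨t, ht, rfl, _⟩ := formA hn hk (by omega) hi hu (h4.trans hσ)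
  obtain ⟨t', ht', rfl, _⟩ := formB hn hk h3 hl hv hb (by omega) (h5.trans hτ)
  obtain ⟨_, hlt⟩ := gapAB hk hi hl h1 (by omega)
  omega

/-- `A → B` on the same track preserves the value. -/
lemma L5 (hn : 2 ≤ n) (hk : 2 ≤ k) {σ τ : Fin (3*k*n+1)} {j u v b : ℕ}
    (hj : j < k) (hu : u < n) (hv : v < n) (hb : b = 1 ∨ b = 2)
    (hsp : ¬(j = 0 ∧ b = 1))
    (hσ : σ.val = enc n j u 0) (hτ : τ.val = enc n j v b) (h : Dd n k σ τ) :
    v = u := by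
  obtain ⟨p, q, h1, h2, h3, h4, h5⟩ := Dd_elim' hn hk h
  obtain ⟨t, ht, rfl, hdu⟩ := formA hn hk (by omega) hj hu (h4.trans hσ)
  obtain ⟨t', ht', rfl, hdv, _⟩ := formB hn hk h3 hj hv hb hsp (h5.trans hτ)
  obtain ⟨rfl, _⟩ := gapAB hk hj hj h1 (by omega)
  rw [hdv, hdu]

/-- no `B → A` arc going up. -/
lemma L9 (hn : 2 ≤ n) (hk : 2 ≤ k) {σ τ : Fin (3*k*n+1)} {i u l v b : ℕ}
    (hi : i < k) (hu : u < n) (hl : l < k) (hv : v < n) (hil : i < l)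
    (hb : b = 1 ∨ b = 2)
    (hσ : σ.val = enc n i u b) (hτ : τ.val = enc n l v 0) : ¬ Dd n k σ τ := by
  intro h
  obtain ⟨p, q, h1, h2, h3, h4, h5⟩ := Dd_elim' hn hk h
  obtain ⟨t', ht', rfl, _⟩ := formA hn hk h3 hl hv (h5.trans hτ)
  by_cases hspec : i = 0 ∧ b = 1
  · obtain ⟨rfl, rfl⟩ := hspec
    have hpend := formSpec hn hk (by omega) hu (h4.trans hσ)
    have := posA_le (n := n) hk ht' hl
    omega
  · obtain ⟨t, ht, rfl, _, _⟩ := formB hn hk (by omega) hi hu hb hspec (h4.trans hσ)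
    obtain ⟨_, hlt⟩ := gapBA hk hi hl h1 (by omega)
    omega

/-- `B → A` on the same track: idle keeps the value, carry increments it. -/
lemma L67 (hn : 2 ≤ n) (hk : 2 ≤ k) {σ τ : Fin (3*k*n+1)} {j u v b : ℕ}
    (hj : j < k) (hu : u < n) (hv : v < n) (hb : b = 1 ∨ b = 2)
    (hσ : σ.val = enc n j u b) (hτ : τ.val = enc n j v 0) (h : Dd n k σ τ) :
    (b = 1 → v = u) ∧ (b = 2 → v = (u+1) % n) := by
  obtain ⟨p, q, h1, h2, h3, h4, h5⟩ := Dd_elim' hn hk h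
  obtain ⟨t', ht', rfl, hdv⟩ := formA hn hk h3 hj hv (h5.trans hτ)
  by_cases hspec : j = 0 ∧ b = 1
  · exfalso
    obtain ⟨rfl, rfl⟩ := hspec
    have hpend := formSpec hn hk (by omega) hu (h4.trans hσ)
    have := posA_le (n := n) hk ht' hj
    omega
  · obtain ⟨t, ht, rfl, hdu, hbc⟩ := formB hn hk (by omega) hj hu hb hspec (h4.trans hσ)
    obtain ⟨rfl, _⟩ := gapBA hk hj hj h1 (by omega)
    constructor
    · intro hb1
      have hcyn : ¬ cy n j t := by
        unfold bc at hbc; by_contra hcc; rw [if_pos hcc] at hbc; omega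
      rw [hdv, dg_step_not hn hcyn, hdu]
    · intro hb2
      have hcyn : cy n j t := by
        unfold bc at hbc; by_contra hcc; rw [if_neg hcc] at hbc; omega
      rw [hdv, dg_step_cy hn hcyn, hdu]

/-- no `B → B` arc with target track not above source track (target not special). -/
lemma L11 (hn : 2 ≤ n) (hk : 2 ≤ k) {σ τ : Fin (3*k*n+1)} {i u l v b b' : ℕ}
    (hi : i < k) (hu : u < n) (hl : l < k) (hv : v < n) (hli : l ≤ i)
    (hb : b = 1 ∨ b = 2) (hb' : b' = 1 ∨ b' = 2) (hsp' : ¬(l = 0 ∧ b' = 1))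
    (hσ : σ.val = enc n i u b) (hτ : τ.val = enc n l v b') : ¬ Dd n k σ τ := by
  intro h
  obtain ⟨p, q, h1, h2, h3, h4, h5⟩ := Dd_elim' hn hk h
  obtain ⟨t', ht', rfl, _, _⟩ := formB hn hk h3 hl hv hb' hsp' (h5.trans hτ)
  by_cases hspec : i = 0 ∧ b = 1
  · obtain ⟨rfl, rfl⟩ := hspec
    have hpend := formSpec hn hk (by omega) hu (h4.trans hσ)
    have := posB_le (n := n) hk ht' hl
    omega
  · obtain ⟨t, ht, rfl, _, _⟩ := formB hn hk (by omega) hi hu hb hspec (h4.trans hσ)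
    obtain ⟨_, hlt⟩ := gapBB hk hi hl h1 (by omega)
    omega

/-- a carry `B`-symbol receives arcs from lower tracks only from their maximal carry symbols. -/
lemma L12 (hn : 2 ≤ n) (hk : 2 ≤ k) {σ τ : Fin (3*k*n+1)} {i u l v b : ℕ}
    (hi : i < k) (hu : u < n) (hl : l < k) (hv : v < n) (hil : i < l)
    (hb : b = 1 ∨ b = 2)
    (hσ : σ.val = enc n i u b) (hτ : τ.val = enc n l v 2) (h : Dd n k σ τ) :
    u = n - 1 ∧ b = 2 := by
  obtain ⟨p, q, h1, h2, h3, h4, h5⟩ := Dd_elim' hn hk h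
  obtain ⟨t', ht', rfl, _, hbc'⟩ := formB hn hk h3 hl hv (by omega) (by omega) (h5.trans hτ)
  by_cases hspec : i = 0 ∧ b = 1
  · exfalso
    obtain ⟨rfl, rfl⟩ := hspec
    have hpend := formSpec hn hk (by omega) hu (h4.trans hσ)
    have := posB_le (n := n) hk ht' hl
    omega
  · obtain ⟨t, ht, rfl, hdu, hbc⟩ := formB hn hk (by omega) hi hu hb hspec (h4.trans hσ)
    obtain ⟨heq, _⟩ := gapBB hk hi hl h1 (by omega)
    rw [heq] at hbc'
    have hcyl : cy n l t := by
      unfold bc at hbc'; by_contra hcc; rw [if_neg hcc] at hbc'; omega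
    have hcyi1 : cy n (i+1) t := cy_mono hn (by omega) hcyl
    obtain ⟨hcyi, hdgi⟩ := (cy_succ_iff hn i t).mp hcyi1
    constructor
    · omega
    · unfold bc at hbc; rw [if_pos hcyi] at hbc; omega

/-- the maximal carry symbol of track `l-1` does not point to idle symbols of track `l`. -/
lemma L18 (hn : 2 ≤ n) (hk : 2 ≤ k) {σ τ : Fin (3*k*n+1)} {l v : ℕ}
    (hl : l < k) (hl1 : 1 ≤ l) (hv : v < n)
    (hσ : σ.val = enc n (l-1) (n-1) 2) (hτ : τ.val = enc n l v 1) :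
    ¬ Dd n k σ τ := by
  intro h
  obtain ⟨p, q, h1, h2, h3, h4, h5⟩ := Dd_elim' hn hk h
  obtain ⟨t', ht', rfl, _, hbc'⟩ := formB hn hk h3 hl hv (by omega) (by omega) (h5.trans hτ)
  obtain ⟨t, ht, rfl, hdu, hbc⟩ := formB hn hk (by omega) (by omega) (by omega)
      (by omega) (by omega) (h4.trans hσ)
  obtain ⟨heq, _⟩ := gapBB hk (by omega) hl h1 (by omega)
  rw [heq] at hbc'
  have hcyi : cy n (l-1) t := by
    unfold bc at hbc; by_contra hcc; rw [if_neg hcc] at hbc; omega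
  have hcyl : cy n l t := by
    have := (cy_succ_iff hn (l-1) t).mpr ⟨hcyi, hdu.symm⟩
    have he : l - 1 + 1 = l := by omega
    rwa [he] at this
  unfold bc at hbc'; rw [if_pos hcyl] at hbc'; omega

/-- arcs into `u*` come only from the final all-carry block. -/
lemma L13 (hn : 2 ≤ n) (hk : 2 ≤ k) {σ τ : Fin (3*k*n+1)}
    (hτ : τ.val = enc n 0 0 1) (h : Dd n k σ τ) :
    ∃ i, i < k ∧ σ.val = enc n i (n-1) 2 := by
  obtain ⟨p, q, h1, h2, h3, h4, h5⟩ := Dd_elim' hn hk h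
  have hq : q = 2*k*(TT n k) + 0 + 1 := formSpec hn hk h3 (by omega) (h5.trans hτ)
  have hT : 0 < TT n k := TT_pos hn
  rcases occ hk (show p < LL n k by omega) with h0 | ⟨t, ht, j, hj, rfl⟩ |
      ⟨t, ht, j, hj, rfl⟩ | ⟨m, hm1, hmn, rfl⟩
  · exfalso
    have : 2*k*1 ≤ 2*k*(TT n k) := Nat.mul_le_mul_left _ (by omega)
    omega
  · exact (gapAE hn hk hj ht (le_refl 1) (by omega) (by omega)).elim
  · obtain ⟨htT, hmj⟩ := gapBE hn hk hj ht (le_refl 1) (by omega) (by omega)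
    subst htT
    refine ⟨j, hj, ?_⟩
    rw [← h4, wcode_posB hn hk ht hj, dg_last hn hj]
    unfold bc
    rw [if_pos (cy_last hn (by omega))]
  · omega

/-- arcs into a filler symbol. -/
lemma L14 (hn : 2 ≤ n) (hk : 2 ≤ k) {σ τ : Fin (3*k*n+1)} {v : ℕ}
    (hv1 : 1 ≤ v) (hv : v < n) (hτ : τ.val = enc n 0 v 1) (h : Dd n k σ τ) :
    σ.val = enc n 0 0 1 ∨ (∃ v', v' < n ∧ σ.val = enc n 0 v' 1) ∨
      ∃ i, v ≤ i ∧ i < k ∧ σ.val = enc n i (n-1) 2 := by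
  obtain ⟨p, q, h1, h2, h3, h4, h5⟩ := Dd_elim' hn hk h
  have hq : q = 2*k*(TT n k) + v + 1 := formSpec hn hk h3 hv (h5.trans hτ)
  have hT : 0 < TT n k := TT_pos hn
  rcases occ hk (show p < LL n k by omega) with h0 | ⟨t, ht, j, hj, rfl⟩ |
      ⟨t, ht, j, hj, rfl⟩ | ⟨m, hm1, hmn, rfl⟩
  · exfalso
    have : 2*k*1 ≤ 2*k*(TT n k) := Nat.mul_le_mul_left _ (by omega)
    omega
  · exact (gapAE hn hk hj ht (show 1 ≤ v + 1 by omega) (by omega) (by omega)).elim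
  · obtain ⟨htT, hmj⟩ := gapBE hn hk hj ht (show 1 ≤ v + 1 by omega) (by omega) (by omega)
    subst htT
    right; right
    refine ⟨j, by omega, hj, ?_⟩
    rw [← h4, wcode_posB hn hk ht hj, dg_last hn hj]
    unfold bc
    rw [if_pos (cy_last hn (by omega))]
  · right; left
    rw [← h4, wcode_end hn hm1 hmn]
    exact ⟨m - 1, by omega, rfl⟩

/-! ### surjectivity of the word -/

lemma W_surj (hn : 2 ≤ n) (hk : 2 ≤ k) (σ : Fin (3*k*n+1)) :
    ∃ p, p < LL n k ∧ W n k p = σ := by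
  have hT : 0 < TT n k := TT_pos hn
  rcases code_cases hn σ.isLt with hz | ⟨j, hj, v, hv, a, ha, hcode⟩
  · refine ⟨0, by unfold LL; omega, ?_⟩
    apply Fin.ext
    rw [W_val hn hk, wcode_zero, hz]
  · have hpow : 0 < n^j := pow_pos (by omega) j
    have hpows : (v+1) * n^j ≤ n * n^j := Nat.mul_le_mul_right _ (by omega)
    have hpeq : n * n^j = n^(j+1) := (pow_succ' n j).symm
    have hple : n^(j+1) ≤ n^k := Nat.pow_le_pow_right (by omega) (by omega)
    have hexp : (v+1) * n^j = v * n^j + n^j := by ring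
    have htlt : v * n^j + n^j ≤ TT n k := by unfold TT; omega
    have h30 : a = 0 ∨ a = 1 ∨ a = 2 := by omega
    rcases h30 with rfl | rfl | rfl
    · -- A symbol
      refine ⟨posA k (v * n^j) j, ?_, ?_⟩
      · have := posA_le (n := n) hk (show v * n^j < TT n k by omega) hj
        unfold LL; omega
      · apply Fin.ext
        rw [W_val hn hk, wcode_posA hn hk (by omega) hj, hcode]
        congr 2
        unfold dg
        rw [Nat.mul_div_cancel _ hpow]
        exact Nat.mod_eq_of_lt hv
    · -- idle B symbol (j ≥ 1) or filler (j = 0)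
      rcases Nat.eq_zero_or_pos j with rfl | hj1
      · refine ⟨2*k*(TT n k) + v + 1, by unfold LL; omega, ?_⟩
        apply Fin.ext
        have : 2*k*(TT n k) + v + 1 = 2*k*(TT n k) + (v+1) := by omega
        rw [W_val hn hk, this, wcode_end hn (by omega) (by omega), hcode]
        congr 2
      · refine ⟨posB k (v * n^j) j, ?_, ?_⟩
        · have := posB_le (n := n) hk (show v * n^j < TT n k by omega) hj
          unfold LL; omega
        · apply Fin.ext
          rw [W_val hn hk, wcode_posB hn hk (by omega) hj, hcode]
          have hdg : dg n j (v * n^j) = v := by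
            unfold dg
            rw [Nat.mul_div_cancel _ hpow]
            exact Nat.mod_eq_of_lt hv
          have hncy : ¬ cy n j (v * n^j) := by
            unfold cy
            rw [Nat.mul_mod_left]
            have : n ≤ n^j := by
              calc n = n^1 := (pow_one n).symm
              _ ≤ n^j := Nat.pow_le_pow_right (by omega) (by omega)
            omega
          rw [hdg]
          unfold bc
          rw [if_neg hncy]
    · -- carry B symbol
      refine ⟨posB k (v * n^j + (n^j - 1)) j, ?_, ?_⟩
      · have := posB_le (n := n) hk (show v * n^j + (n^j - 1) < TT n k by omega) hj
        unfold LL; omega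
      · apply Fin.ext
        rw [W_val hn hk, wcode_posB hn hk (by omega) hj, hcode]
        have hrw : v * n^j + (n^j - 1) = (n^j - 1) + n^j * v := by
          rw [Nat.mul_comm v (n^j)]; omega
        have hdg : dg n j (v * n^j + (n^j - 1)) = v := by
          unfold dg
          rw [hrw, Nat.add_mul_div_left _ _ hpow, Nat.div_eq_of_lt (by omega)]
          have : 0 + v = v := by omega
          rw [this]
          exact Nat.mod_eq_of_lt hv
        have hcy : cy n j (v * n^j + (n^j - 1)) := by
          unfold cy
          rw [hrw, Nat.add_mul_mod_self_left]
          exact Nat.mod_eq_of_lt (by omega)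
        rw [hdg]
        unfold bc
        rw [if_pos hcy]

lemma xw_len : (xw n k).length = LL n k := by unfold xw; simp

lemma xw_realization (hn : 2 ≤ n) (hk : 2 ≤ k) :
    IsRealizationD (k+1) (Dd n k) (xw n k) := by
  refine ⟨?_, ?_, fun u v => Iff.rfl⟩
  · have h := xw_len (n := n) (k := k)
    intro hempty
    rw [hempty] at h
    unfold LL at h
    simp at h
  · intro σ
    obtain ⟨p, hp, hW⟩ := W_surj hn hk σ
    unfold xw
    exact List.mem_map.mpr ⟨p, List.mem_range.mpr hp, hW⟩

lemma length_ge_card {M : ℕ} {y : List (Fin (M+1))} (h : ∀ σ, σ ∈ y) :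
    M + 1 ≤ y.length := by
  have h1 : (Finset.univ : Finset (Fin (M+1))) ⊆ y.toFinset :=
    fun σ _ => List.mem_toFinset.mpr (h σ)
  have h2 := Finset.card_le_card h1
  rw [Finset.card_univ, Fintype.card_fin] at h2
  exact le_trans h2 y.toFinset_card_le

/-! ### track extraction -/

lemma trk_of_enc (hn : 2 ≤ n) {c j v a : ℕ} (hv : v < n) (ha : a < 3)
    (h : c = enc n j v a) : c / (3*n) = j := by
  subst h
  unfold enc
  have he : 3*n*j + 3*v + a = (3*v+a) + (3*n)*j := by ring
  rw [he, Nat.add_mul_div_left _ _ (by omega), Nat.div_eq_of_lt (by omega)]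
  omega

/-! ### rigidity -/

theorem rigid (hn : 2 ≤ n) (hk : 2 ≤ k) (y : List (Fin (3*k*n+1)))
    (hmem : ∀ σ, σ ∈ y)
    (harc : ∀ σ τ, seqArc (k+1) y σ τ → Dd n k σ τ) :
    ∀ p, p < y.length → p ≤ 2*k*(TT n k) → y[p]? = some (W n k p) := by
  have hT : 0 < TT n k := TT_pos hn
  have hlen : 3*k*n + 1 ≤ y.length := length_ge_card hmem
  have hkn : k + 1 ≤ 3*k*n := by
    have h6 : 3*k*2 ≤ 3*k*n := Nat.mul_le_mul_left _ hn
    omega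
  have mkarc : ∀ {a b : ℕ} {σ τ : Fin (3*k*n+1)}, a < b → b ≤ a + k →
      y[a]? = some σ → y[b]? = some τ → Dd n k σ τ := by
    intro a b σ τ h1 h2 ha hb
    exact harc σ τ ⟨a, b, h1, by omega, ha, hb⟩
  -- the start symbol z sits at position 0
  have hy0 : y[0]? = some (W n k 0) := by
    obtain ⟨qz, hqzlt, hqz⟩ := List.getElem_of_mem (hmem (W n k 0))
    have hzval : (W n k 0).val = 3*k*n := by rw [W_val hn hk, wcode_zero]
    rcases Nat.eq_zero_or_pos qz with rfl | hqz1
    · rw [List.getElem?_eq_getElem hqzlt, hqz]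
    · exfalso
      have hprev : y[qz - 1]? = some (y[qz-1]'(by omega)) :=
        List.getElem?_eq_getElem _
      have harc1 := mkarc (show qz - 1 < qz by omega) (by omega) hprev
        (by rw [List.getElem?_eq_getElem hqzlt, hqz])
      exact L1 hn hk hzval harc1
  -- the first block is rigid
  have hbase : ∀ q, 1 ≤ q → q ≤ k → y[q]? = some (W n k q) := by
    have hq_lt : ∀ i : Fin k, i.val + 1 < y.length := fun i => by
      have := i.isLt; omega
    set f : Fin k → Fin k :=
      fun i => ⟨(y[i.val+1]'(hq_lt i)).val / (3*n) % k, Nat.mod_lt _ (by omega)⟩ with hf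
    have hfspec : ∀ i : Fin k, (y[i.val+1]'(hq_lt i)).val = enc n (f i).val 0 0 := by
      intro i
      have harc1 : Dd n k (W n k 0) (y[i.val+1]'(hq_lt i)) :=
        mkarc (show 0 < i.val+1 by omega) (by have := i.isLt; omega) hy0
          (List.getElem?_eq_getElem _)
      obtain ⟨j, hj, hval⟩ := L2 hn hk (by rw [W_val hn hk, wcode_zero]) harc1
      have htrk : (y[i.val+1]'(hq_lt i)).val / (3*n) = j :=
        trk_of_enc hn (by omega) (by omega) hval
      have hfi : (f i).val = j := by
        show (y[i.val+1]'(hq_lt i)).val / (3*n) % k = j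
        rw [htrk, Nat.mod_eq_of_lt hj]
      rw [hfi]
      exact hval
    have hfmono : StrictMono f := by
      intro i i' hii
      have harc2 : Dd n k (y[i.val+1]'(hq_lt i)) (y[i'.val+1]'(hq_lt i')) :=
        mkarc (show i.val + 1 < i'.val + 1 by exact Nat.add_lt_add_right hii 1)
          (by have := i'.isLt; have := i.isLt; omega)
          (List.getElem?_eq_getElem _) (List.getElem?_eq_getElem _)
      by_contra hnot
      have hle : (f i').val ≤ (f i).val := by
        have := Fin.not_lt.mp hnot
        exact this
      exact LA hn hk (f i).isLt (by omega) (f i').isLt (by omega) hle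
        (hfspec i) (hfspec i') harc2
    have hfid : f = id := by
      have hsurj : Function.Surjective f := Finite.surjective_of_injective hfmono.injective
      apply (StrictMono.range_inj hfmono strictMono_id).mp
      rw [Set.range_id, Set.range_eq_univ]
      exact hsurj
    intro q hq1 hq2
    obtain ⟨q', rfl⟩ : ∃ q', q = q' + 1 := ⟨q - 1, by omega⟩
    have hq'k : q' < k := by omega
    have heq := hfspec ⟨q', hq'k⟩
    rw [hfid] at heq
    have hqlt : q' + 1 < y.length := by omega
    rw [List.getElem?_eq_getElem hqlt]
    congr 1
    apply Fin.ext
    rw [W_val hn hk]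
    have hq_posA : q' + 1 = posA k 0 q' := by unfold posA; omega
    have hwq : wcode n k (q'+1) = enc n q' 0 0 := by
      rw [hq_posA, wcode_posA hn hk hT hq'k, dg_zero]
    rw [hwq]
    exact heq
  -- main strong induction
  intro p
  induction p using Nat.strong_induction_on with
  | _ p IH =>
    intro hplen hple
    rcases Nat.lt_or_ge p (k+1) with hpk | hpk
    · rcases Nat.eq_zero_or_pos p with rfl | hp1
      · exact hy0
      · exact hbase p hp1 (by omega)
    · -- p ≥ k + 1
      have h2k : 0 < 2*k := by omega
      set t := (p-1)/(2*k) with htdef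
      set r := (p-1) % (2*k) with hrdef
      have hr2k : r < 2*k := Nat.mod_lt _ h2k
      have hpt : p - 1 = 2*k*t + r := (Nat.div_add_mod (p-1) (2*k)).symm
      have hpeq : p = 2*k*t + r + 1 := by omega
      have hbp : y[p]? = some (y[p]'hplen) := List.getElem?_eq_getElem _
      set b := y[p]'hplen with hbdef
      have harcs : ∀ q, p - k ≤ q → q < p → Dd n k (W n k q) b := by
        intro q h1 h2
        exact mkarc h2 (by omega) (IH q h2 (by omega) (by omega)) hbp
      suffices hsuff : b.val = wcode n k p by
        rw [hbp]
        congr 1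
        apply Fin.ext
        rw [W_val hn hk]
        exact hsuff
      rcases Nat.lt_or_ge r k with hrk | hrk
      · -- A slot (track r of block t), with t ≥ 1
        have ht1 : 1 ≤ t := by
          rcases Nat.eq_zero_or_pos t with h0 | h
          · exfalso
            rw [h0] at hpeq
            have hz : 2*k*0 = 0 := by ring
            omega
          · exact h
        obtain ⟨t0, ht0⟩ : ∃ t0, t = t0 + 1 := ⟨t - 1, by omega⟩
        rw [ht0] at hpeq
        have htT : t0 + 1 < TT n k := by
          by_contra hge
          have : 2*k*(TT n k) ≤ 2*k*(t0+1) := Nat.mul_le_mul_left _ (by omega)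
          omega
        have ht0T : t0 < TT n k := by omega
        have hmul : 2*k*(t0+1) = 2*k*t0 + 2*k := by ring
        have hcanon : wcode n k p = enc n r (dg n r (t0+1)) 0 := by
          have hpos : p = posA k (t0+1) r := by unfold posA; omega
          rw [hpos, wcode_posA hn hk htT hrk]
        have hWA : ∀ i, i < k →
            (W n k (posA k (t0+1) i)).val = enc n i (dg n i (t0+1)) 0 :=
          fun i hi => by rw [W_val hn hk, wcode_posA hn hk htT hi]
        have hWB : ∀ i, i < k →
            (W n k (posB k t0 i)).val = enc n i (dg n i t0) (bc n i t0) :=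
          fun i hi => by rw [W_val hn hk, wcode_posB hn hk ht0T hi]
        have harcA : ∀ i, i < r → Dd n k (W n k (posA k (t0+1) i)) b := by
          intro i hi
          apply harcs <;> (unfold posA; omega)
        have harcB : ∀ i, r ≤ i → i < k → Dd n k (W n k (posB k t0 i)) b := by
          intro i h1 h2
          apply harcs <;> (unfold posB; omega)
        rcases code_cases hn b.isLt with hbz | ⟨l, hl, v', hv', a, ha, hbcode⟩
        · exact absurd (harcB (k-1) (by omega) (by omega)) (L1 hn hk hbz)
        · rcases (show a = 0 ∨ (a = 1 ∧ l = 0) ∨ ((a = 1 ∧ 1 ≤ l) ∨ a = 2) by omega)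
            with rfl | ⟨rfl, rfl⟩ | hBtype
          · -- A-type candidate
            rcases Nat.lt_trichotomy l r with hlr | rfl | hlr
            · exact absurd (harcA l hlr)
                (LA hn hk hl (dg_lt hn _ _) hl hv' (le_refl l) (hWA l (by omega)) hbcode)
            · have h67 := L67 hn hk hrk (dg_lt hn _ _) hv' (bc_cases _ _)
                (hWB r (by omega)) hbcode (harcB r (le_refl r) hrk)
              have hv'eq : v' = dg n r (t0+1) := by
                rcases bc_cases (n := n) r t0 with h1 | h1
                · have hncy : ¬ cy n r t0 := by
                    unfold bc at h1
                    by_contra hcc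
                    rw [if_pos hcc] at h1
                    omega
                  rw [h67.1 h1, ← dg_step_not hn hncy]
                · have hcyx : cy n r t0 := by
                    unfold bc at h1
                    by_contra hcc
                    rw [if_neg hcc] at h1
                    omega
                  rw [h67.2 h1, ← dg_step_cy hn hcyx]
              rw [hbcode, hv'eq, hcanon]
            · exact absurd (harcB r (le_refl r) hrk)
                (L9 hn hk hrk (dg_lt hn _ _) hl hv' hlr (bc_cases _ _)
                  (hWB r (by omega)) hbcode)
          · -- special candidate (a = 1, l = 0)
            rcases Nat.eq_zero_or_pos r with hr0 | hr1
            · rcases Nat.eq_zero_or_pos v' with rfl | hv'1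
              · exfalso
                obtain ⟨i, hik, hival⟩ :=
                  L13 hn hk hbcode (harcB (k-1) (by omega) (by omega))
                rw [hWB (k-1) (by omega)] at hival
                obtain ⟨hi1, hi2, hi3⟩ := enc_inj hn (dg_lt hn _ _) (by omega)
                  (by rcases bc_cases (n := n) (k-1) t0 with h | h <;> omega)
                  (by omega) hival
                have hcyk : cy n (k-1) t0 := by
                  unfold bc at hi3
                  by_contra hcc
                  rw [if_neg hcc] at hi3
                  omega
                have := top_unique hn (by omega) ht0T hcyk hi2
                omega
              · exfalso
                have h14 := L14 hn hk hv'1 hv' hbcode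
                  (harcB 0 (by omega) (by omega))
                rw [hWB 0 (by omega), bc_zero] at h14
                rcases h14 with h | ⟨v'', hv'', h⟩ | ⟨i, hvi, hik, h⟩
                · obtain ⟨_, _, h3⟩ :=
                    enc_inj hn (dg_lt hn _ _) (by omega) (by omega) (by omega) h
                  omega
                · obtain ⟨_, _, h3⟩ :=
                    enc_inj hn (dg_lt hn _ _) hv'' (by omega) (by omega) h
                  omega
                · obtain ⟨h1, _, _⟩ :=
                    enc_inj hn (dg_lt hn _ _) (by omega) (by omega) (by omega) h
                  omega
            · exfalso
              rcases Nat.eq_zero_or_pos v' with rfl | hv'1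
              · obtain ⟨i, hik, hival⟩ := L13 hn hk hbcode (harcA 0 hr1)
                rw [hWA 0 (by omega)] at hival
                obtain ⟨_, _, h3⟩ :=
                  enc_inj hn (dg_lt hn _ _) (by omega) (by omega) (by omega) hival
                omega
              · have h14 := L14 hn hk hv'1 hv' hbcode (harcA 0 hr1)
                rw [hWA 0 (by omega)] at h14
                rcases h14 with h | ⟨v'', hv'', h⟩ | ⟨i, hvi, hik, h⟩
                · obtain ⟨_, _, h3⟩ :=
                    enc_inj hn (dg_lt hn _ _) (by omega) (by omega) (by omega) h
                  omega
                · obtain ⟨_, _, h3⟩ :=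
                    enc_inj hn (dg_lt hn _ _) hv'' (by omega) (by omega) h
                  omega
                · obtain ⟨_, _, h3⟩ :=
                    enc_inj hn (dg_lt hn _ _) (by omega) (by omega) (by omega) h
                  omega
          · -- B-type candidate
            have ha12 : a = 1 ∨ a = 2 := by
              rcases hBtype with ⟨h1, _⟩ | h1
              · exact Or.inl h1
              · exact Or.inr h1
            have hnsp : ¬(l = 0 ∧ a = 1) := by
              rcases hBtype with ⟨h1, h2⟩ | h1 <;> omega
            exact absurd (harcB (k-1) (by omega) (by omega))
              (L11 hn hk (by omega) (dg_lt hn _ _) hl hv' (by omega)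
                (bc_cases _ _) ha12 hnsp (hWB (k-1) (by omega)) hbcode)
      · -- B slot (track r - k of block t)
        set j := r - k with hjdef
        have hjk : j < k := by omega
        have htT : t < TT n k := by
          by_contra hge
          have : 2*k*(TT n k) ≤ 2*k*t := Nat.mul_le_mul_left _ (by omega)
          omega
        have hcanon : wcode n k p = enc n j (dg n j t) (bc n j t) := by
          have hpos : p = posB k t j := by unfold posB; omega
          rw [hpos, wcode_posB hn hk htT hjk]
        have hWA : ∀ i, i < k → (W n k (posA k t i)).val = enc n i (dg n i t) 0 :=
          fun i hi => by rw [W_val hn hk, wcode_posA hn hk htT hi]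
        have hWB : ∀ i, i < k →
            (W n k (posB k t i)).val = enc n i (dg n i t) (bc n i t) :=
          fun i hi => by rw [W_val hn hk, wcode_posB hn hk htT hi]
        have harcA : ∀ i, j ≤ i → i < k → Dd n k (W n k (posA k t i)) b := by
          intro i h1 h2
          apply harcs <;> (unfold posA; omega)
        have harcB : ∀ i, i < j → Dd n k (W n k (posB k t i)) b := by
          intro i hi
          apply harcs <;> (unfold posB; omega)
        rcases code_cases hn b.isLt with hbz | ⟨l, hl, v', hv', a, ha, hbcode⟩
        · exact absurd (harcA (k-1) (by omega) (by omega)) (L1 hn hk hbz)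
        · rcases (show a = 0 ∨ (a = 1 ∧ l = 0) ∨ ((a = 1 ∧ 1 ≤ l) ∨ a = 2) by omega)
            with rfl | ⟨rfl, rfl⟩ | hBtype
          · exact absurd (harcA (k-1) (by omega) (by omega))
              (LA hn hk (by omega) (dg_lt hn _ _) hl hv' (by omega)
                (hWA (k-1) (by omega)) hbcode)
          · exfalso
            rcases Nat.eq_zero_or_pos v' with rfl | hv'1
            · obtain ⟨i, hik, hival⟩ :=
                L13 hn hk hbcode (harcA (k-1) (by omega) (by omega))
              rw [hWA (k-1) (by omega)] at hival
              obtain ⟨_, _, h3⟩ :=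
                enc_inj hn (dg_lt hn _ _) (by omega) (by omega) (by omega) hival
              omega
            · have h14 := L14 hn hk hv'1 hv' hbcode
                (harcA (k-1) (by omega) (by omega))
              rw [hWA (k-1) (by omega)] at h14
              rcases h14 with h | ⟨v'', hv'', h⟩ | ⟨i, hvi, hik, h⟩
              · obtain ⟨_, _, h3⟩ :=
                  enc_inj hn (dg_lt hn _ _) (by omega) (by omega) (by omega) h
                omega
              · obtain ⟨_, _, h3⟩ :=
                  enc_inj hn (dg_lt hn _ _) hv'' (by omega) (by omega) h
                omega
              · obtain ⟨_, _, h3⟩ :=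
                  enc_inj hn (dg_lt hn _ _) (by omega) (by omega) (by omega) h
                omega
          · have ha12 : a = 1 ∨ a = 2 := by
              rcases hBtype with ⟨h1, _⟩ | h1
              · exact Or.inl h1
              · exact Or.inr h1
            have hnsp : ¬(l = 0 ∧ a = 1) := by
              rcases hBtype with ⟨h1, h2⟩ | h1 <;> omega
            rcases Nat.lt_trichotomy l j with hlj | hlj | hlj
            · exact absurd (harcB l hlj)
                (L11 hn hk hl (dg_lt hn _ _) hl hv' (le_refl l) (bc_cases _ _) ha12 hnsp
                  (hWB l (by omega)) hbcode)
            · -- same track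
              rw [hlj] at hbcode hnsp
              have hv'eq : v' = dg n j t :=
                L5 hn hk hjk (dg_lt hn _ _) hv' ha12 hnsp (hWA j (by omega)) hbcode
                  (harcA j (le_refl j) hjk)
              by_cases hcy : cy n j t
              · rcases ha12 with rfl | rfl
                · exfalso
                  have hl1 : 1 ≤ j := by
                    rcases Nat.eq_zero_or_pos j with h0 | h
                    · exfalso; exact hnsp ⟨h0, rfl⟩
                    · exact h
                  have hlsucc : j - 1 + 1 = j := by omega
                  have hcy1 := (cy_succ_iff hn (j-1) t).mp (by rwa [hlsucc])
                  have hbcl : bc n (j-1) t = 2 := by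
                    unfold bc
                    rw [if_pos hcy1.1]
                  have hsrc : (W n k (posB k t (j-1))).val = enc n (j-1) (n-1) 2 := by
                    rw [hWB (j-1) (by omega), hcy1.2, hbcl]
                  exact L18 hn hk hjk hl1 hv' hsrc hbcode (harcB (j-1) (by omega))
                · rw [hbcode, hv'eq, hcanon]
                  unfold bc
                  rw [if_pos hcy]
              · rcases ha12 with rfl | rfl
                · rw [hbcode, hv'eq, hcanon]
                  unfold bc
                  rw [if_neg hcy]
                · exfalso
                  have hl1 : 1 ≤ j := by
                    rcases Nat.eq_zero_or_pos j with h0 | h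
                    · exfalso
                      rw [h0] at hcy
                      exact hcy (cy_zero t)
                    · exact h
                  have h12 := L12 hn hk (show j-1 < k by omega) (dg_lt hn _ _) hjk hv'
                    (show j-1 < j by omega) (bc_cases _ _) (hWB (j-1) (by omega)) hbcode
                    (harcB (j-1) (by omega))
                  have hcyl1 : cy n (j-1) t := by
                    have h2 := h12.2
                    unfold bc at h2
                    by_contra hcc
                    rw [if_neg hcc] at h2
                    omega
                  have hx := (cy_succ_iff hn (j-1) t).mpr ⟨hcyl1, h12.1⟩
                  have hlsucc : j - 1 + 1 = j := by omega
                  rw [hlsucc] at hx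
                  exact hcy hx
            · exact absurd (harcA j (le_refl j) hjk)
                (L10 hn hk hjk (dg_lt hn _ _) hl hv' hlj ha12 (hWA j (by omega)) hbcode)

end S16

theorem stmt16 (n k : ℕ) (hn : 0 < n) (hk : 0 < k) :
    ∃ Adj : Fin (3 * k * n + 1) → Fin (3 * k * n + 1) → Prop,
      (∃ x : List (Fin (3 * k * n + 1)), IsRealizationD (k + 1) Adj x) ∧
      ∀ x : List (Fin (3 * k * n + 1)), IsRealizationD (k + 1) Adj x →
        2 * k * n ^ k ≤ x.length := by
  by_cases htriv : n = 1 ∨ k = 1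
  · -- small cases: the vertex count alone suffices
    refine ⟨seqArc (k+1) (List.ofFn (fun i : Fin (3*k*n+1) => i)),
      ⟨List.ofFn (fun i : Fin (3*k*n+1) => i), ?_, ?_, fun u v => Iff.rfl⟩, ?_⟩
    · intro h
      have hlen : (List.ofFn (fun i : Fin (3*k*n+1) => i)).length = 3*k*n+1 := by simp
      rw [h] at hlen
      simp at hlen
    · intro σ
      rw [List.mem_ofFn]
      exact ⟨σ, rfl⟩
    · intro x hx2
      obtain ⟨_, hmem, _⟩ := hx2
      have hN := S16.length_ge_card hmem
      rcases htriv with rfl | rfl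
      · have h1 : (1:ℕ)^k = 1 := one_pow k
        rw [h1]
        omega
      · have h1 : n^1 = n := pow_one n
        rw [h1]
        omega
  · push_neg at htriv
    have hn2 : 2 ≤ n := by omega
    have hk2 : 2 ≤ k := by omega
    refine ⟨S16.Dd n k, ⟨S16.xw n k, S16.xw_realization hn2 hk2⟩, ?_⟩
    intro y hy
    obtain ⟨hne, hmem, hiff⟩ := hy
    have harc : ∀ σ τ, seqArc (k+1) y σ τ → S16.Dd n k σ τ :=
      fun σ τ h => (hiff σ τ).mpr h
    have hrig := S16.rigid hn2 hk2 y hmem harc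
    set uV : Fin (3*k*n+1) :=
      ⟨S16.enc n 0 0 1, by
        have := S16.enc_lt (k := k) hn2 (show 0 < k by omega)
          (show 0 < n by omega) (show 1 < 3 by omega)
        omega⟩ with huV
    obtain ⟨q, hqlt, hq⟩ := List.getElem_of_mem (hmem uV)
    have hq2 : 2*k*(S16.TT n k) < q := by
      by_contra hle
      push_neg at hle
      have hthis := hrig q hqlt hle
      rw [List.getElem?_eq_getElem hqlt, hq] at hthis
      have heqv : uV = S16.W n k q := Option.some.inj hthis
      have hval : S16.wcode n k q = S16.enc n 0 0 1 := by
        rw [← S16.W_val hn2 hk2 q, ← heqv]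
      have hqe := S16.formSpec hn2 hk2
        (show q < S16.LL n k by unfold S16.LL; omega) (show 0 < n by omega) hval
      omega
    have hTT : 2*k*n^k = 2*k*(S16.TT n k) := rfl
    omega
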